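/- Let l be a list over a linear order with no duplicate entries. Then no two adjacent indices of l are both local-minimum indices, and consequently the number of local-minimum indices of l is at most ⌈(length of l)/2⌉. -/

import Mathlib

open scoped Classical

/-- An index `i` of the list `l` is a local-minimum index if `l[i] < l[i-1]` whenever
`i > 0` and `l[i] < l[i+1]` whenever `i + 1 < l.length`. -/
def IsLocalMinIdx {α : Type*} [LinearOrder α] (l : List α) (i : ℕ) : Prop :=
  ∃ h : i < l.length,
    (∀ _hi : 0 < i, l[i] < l[i - 1]) ∧ (∀ _hj : i + 1 < l.length, l[i] < l[i + 1])

/-- In a duplicate-free list, no two adjacent indices are both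
local-minimum indices; consequently the number of local-minimum indices is at most
`⌈(length l)/2⌉`. -/
theorem localMin_adjacent_and_count {α : Type*} [LinearOrder α]
    (l : List α) (hl : l.Nodup) :
    (∀ i : ℕ, IsLocalMinIdx l i → ¬ IsLocalMinIdx l (i + 1)) ∧
    ((Finset.range l.length).filter fun i => IsLocalMinIdx l i).card ≤
      (l.length + 1) / 2 := by
  have hadj : ∀ i : ℕ, IsLocalMinIdx l i → ¬ IsLocalMinIdx l (i + 1) := by
    rintro i ⟨hi, _, h2⟩ ⟨hj, h3, _⟩
    have a := h2 hj
    have b := h3 (Nat.succ_pos i)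
    simp only [Nat.add_sub_cancel] at b
    exact absurd a (not_lt.2 b.le)
  refine ⟨hadj, ?_⟩
  set S := (Finset.range l.length).filter fun i => IsLocalMinIdx l i with hS
  have : S.card ≤ (Finset.range ((l.length + 1) / 2)).card := by
    apply Finset.card_le_card_of_injOn (fun i => i / 2)
    · intro i hi
      simp only [hS, Finset.mem_coe, Finset.mem_filter, Finset.mem_range] at hi ⊢
      omega
    · intro i hi j hj hij
      have hij : i / 2 = j / 2 := hij
      simp only [hS, Finset.coe_filter, Finset.mem_range, Set.mem_setOf_eq] at hi hj
      by_contra hne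
      have : i + 1 = j ∨ j + 1 = i := by omega
      rcases this with h | h
      · exact hadj i hi.2 (h ▸ hj.2)
      · exact hadj j hj.2 (h ▸ hi.2)
  simpa using this
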